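/- Let n ≥ 1. Let s : ℝ → ℝ satisfy 0 < s(a) ≤ 1 for every a > 0, s antitone on (0,∞) and log∘s convex on (0,∞). Let g : ℝ → ℝ satisfy 0 < g(t) < 1 for every t > 0, g antitone on (0,∞) and log∘g convex on (0,∞). Let v, u, α, β : Fin n → ℝ be positive and nondecreasing tuples (v 1 ≤ … ≤ v n, and similarly for u, α, β) such that for every k = 1,…,n: Σ_{i=1}^k α i ≤ Σ_{i=1}^k β i and Σ_{i=1}^k v i ≤ Σ_{i=1}^k u i. Let q₁, q₂ : {1,…,n} → ℝ be nonnegative with Σ_{m=1}^n q₁(m) = Σ_{m=1}^n q₂(m) = 1 and Σ_{m=k}^n q₁(m) ≤ Σ_{m=k}^n q₂(m) for every k. Then Σ_{m=1}^n q₁(m) · ∏_{i=1}^m g(v i)·s(α i) ≥ Σ_{m=1}^n q₂(m) · ∏_{i=1}^m g(u i)·s(β i). -/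

import Mathlib

open Finset

/-- Sum of the first `k` entries of the tuple `a`. -/
noncomputable def prefixSum {n : ℕ} (a : Fin n → ℝ) (k : ℕ) : ℝ :=
  ∑ i ∈ Finset.univ.filter (fun i : Fin n => (i : ℕ) < k), a i

/-- Product of the first `m` entries of the tuple `c`. -/
noncomputable def prefixProd {n : ℕ} (c : Fin n → ℝ) (m : ℕ) : ℝ :=
  ∏ i ∈ Finset.univ.filter (fun i : Fin n => (i : ℕ) < m), c i


/-- Abel-type inequality. -/
lemma abel_ineq : ∀ (m : ℕ) (d e : ℕ → ℝ),
    (∀ i, i+1 < m → d i ≤ d (i+1)) → (∀ i, i+1 = m → d i ≤ 0) →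
    (∀ k, k ≤ m → ∑ j ∈ range k, e j ≤ 0) →
    0 ≤ ∑ i ∈ range m, d i * e i := by
  intro m
  induction m with
  | zero => intro d e _ _ _; simp
  | succ m ih =>
    intro d e hd hlast hE
    have key : ∑ i ∈ range (m+1), d i * e i
        = (∑ i ∈ range m, (d i - d m) * e i) + d m * ∑ i ∈ range (m+1), e i := by
      simp only [sub_mul, Finset.sum_sub_distrib, Finset.mul_sum, Finset.sum_range_succ]
      rw [← Finset.mul_sum]
      ring
    rw [key]
    have h1 : 0 ≤ ∑ i ∈ range m, (d i - d m) * e i := by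
      apply ih
      · intro i hi
        have := hd i (by omega)
        linarith
      · intro i hi
        subst hi
        have := hd i (by omega)
        linarith
      · intro k hk; exact hE k (by omega)
    have h2 : 0 ≤ d m * ∑ i ∈ range (m+1), e i := by
      have := hE (m+1) le_rfl
      have := hlast m rfl
      nlinarith
    linarith

/-- slope of an antitone function is nonpositive. -/
lemma slope_nonpos (φ : ℝ → ℝ) (hanti : AntitoneOn φ (Set.Ioi 0))
    {x y : ℝ} (hx : x ∈ Set.Ioi (0:ℝ)) (hy : y ∈ Set.Ioi (0:ℝ)) (hne : x ≠ y) :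
    (φ y - φ x) / (y - x) ≤ 0 := by
  rcases lt_or_gt_of_ne hne with h | h
  · apply div_nonpos_of_nonpos_of_nonneg
    · have := hanti hx hy h.le; linarith
    · linarith
  · apply div_nonpos_of_nonneg_of_nonpos
    · have := hanti hy hx h.le; linarith
    · linarith

/-- double monotonicity of slopes of convex function. -/
lemma slope_pair_mono (φ : ℝ → ℝ) (hconv : ConvexOn ℝ (Set.Ioi 0) φ)
    {x y x' y' : ℝ} (hx : x ∈ Set.Ioi (0:ℝ)) (hy : y ∈ Set.Ioi (0:ℝ))
    (hx' : x' ∈ Set.Ioi (0:ℝ)) (hy' : y' ∈ Set.Ioi (0:ℝ))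
    (hxx : x ≤ x') (hyy : y ≤ y') (h1 : x ≠ y) (h2 : x' ≠ y') :
    (φ y - φ x) / (y - x) ≤ (φ y' - φ x') / (y' - x') := by
  have comm : ∀ p q : ℝ, (φ p - φ q) / (p - q) = (φ q - φ p) / (q - p) := by
    intro p q
    rw [← neg_sub (φ p), ← neg_sub p, neg_div_neg_eq]
  by_cases hy'x : y' = x
  · have hx'x : x' ≠ x := by rw [hy'x] at h2; exact h2
    have hyx' : y ≤ x' := by rw [hy'x] at hyy; exact hyy.trans hxx
    rw [hy'x, comm x x']
    exact hconv.secant_mono hx hy hx' h1.symm hx'x hyx'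
  · calc (φ y - φ x) / (y - x)
        ≤ (φ y' - φ x) / (y' - x) := hconv.secant_mono hx hy hy' h1.symm hy'x hyy
      _ = (φ x - φ y') / (x - y') := comm _ _
      _ ≤ (φ x' - φ y') / (x' - y') :=
        hconv.secant_mono hy' hx hx' (fun h => hy'x h.symm) h2 hxx
      _ = (φ y' - φ x') / (y' - x') := comm _ _

/-- majorization-type inequality, distinct case. -/
lemma key_distinct (φ : ℝ → ℝ) (hconv : ConvexOn ℝ (Set.Ioi 0) φ)
    (hanti : AntitoneOn φ (Set.Ioi 0)) (m : ℕ) (a b : ℕ → ℝ)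
    (ha : ∀ i, i < m → 0 < a i) (hb : ∀ i, i < m → 0 < b i)
    (ham : ∀ i, i+1 < m → a i ≤ a (i+1)) (hbm : ∀ i, i+1 < m → b i ≤ b (i+1))
    (hpre : ∀ k, k ≤ m → ∑ j ∈ range k, a j ≤ ∑ j ∈ range k, b j)
    (hne : ∀ i, i < m → a i ≠ b i) :
    ∑ j ∈ range m, φ (b j) ≤ ∑ j ∈ range m, φ (a j) := by
  set d : ℕ → ℝ := fun i => (φ (b i) - φ (a i)) / (b i - a i) with hd_def
  have habel : 0 ≤ ∑ i ∈ range m, d i * (a i - b i) := by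
    apply abel_ineq
    · intro i hi
      exact slope_pair_mono φ hconv (Set.mem_Ioi.mpr (ha i (by omega)))
        (Set.mem_Ioi.mpr (hb i (by omega))) (Set.mem_Ioi.mpr (ha (i+1) (by omega)))
        (Set.mem_Ioi.mpr (hb (i+1) (by omega))) (ham i hi) (hbm i hi)
        (hne i (by omega)) (hne (i+1) (by omega))
    · intro i hi
      exact slope_nonpos φ hanti (Set.mem_Ioi.mpr (ha i (by omega)))
        (Set.mem_Ioi.mpr (hb i (by omega))) (hne i (by omega))
    · intro k hk
      have := hpre k hk
      calc ∑ j ∈ range k, (a j - b j)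
            = ∑ j ∈ range k, a j - ∑ j ∈ range k, b j := Finset.sum_sub_distrib _ _
        _ ≤ 0 := by linarith
  have hterm : ∀ i ∈ range m, d i * (a i - b i) = φ (a i) - φ (b i) := by
    intro i hi
    rw [mem_range] at hi
    have hne' : b i - a i ≠ 0 := sub_ne_zero_of_ne (Ne.symm (hne i hi))
    rw [hd_def]
    field_simp
    ring
  rw [Finset.sum_congr rfl hterm, Finset.sum_sub_distrib] at habel
  linarith

/-- majorization-type inequality. -/
lemma key (φ : ℝ → ℝ) (hconv : ConvexOn ℝ (Set.Ioi 0) φ)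
    (hanti : AntitoneOn φ (Set.Ioi 0)) (m : ℕ) (a b : ℕ → ℝ)
    (ha : ∀ i, i < m → 0 < a i) (hb : ∀ i, i < m → 0 < b i)
    (ham : ∀ i, i+1 < m → a i ≤ a (i+1)) (hbm : ∀ i, i+1 < m → b i ≤ b (i+1))
    (hpre : ∀ k, k ≤ m → ∑ j ∈ range k, a j ≤ ∑ j ∈ range k, b j) :
    ∑ j ∈ range m, φ (b j) ≤ ∑ j ∈ range m, φ (a j) := by
  -- choose μ > 0 such that all ε ∈ (0, μ) avoid the differences a i - b i
  set P : Finset ℝ := ((range m).image (fun i => a i - b i)).filter (fun x => 0 < x) with hP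
  set μ : ℝ := if h : P.Nonempty then min 1 (P.min' h) else 1 with hμ
  have hμpos : 0 < μ := by
    rw [hμ]
    split
    · rename_i h
      apply lt_min one_pos
      exact (Finset.mem_filter.mp (P.min'_mem h)).2
    · exact one_pos
  have hgood : ∀ ε, ε ∈ Set.Ioo 0 μ → ∀ i, i < m → a i ≠ b i + ε := by
    intro ε hε i hi hcon
    have hmem : a i - b i ∈ P := by
      rw [hP, mem_filter]
      constructor
      · exact Finset.mem_image_of_mem _ (mem_range.mpr hi)
      · simp only [hcon]; linarith [hε.1]
    have hPne : P.Nonempty := ⟨_, hmem⟩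
    have h1 : μ ≤ P.min' hPne := by rw [hμ, dif_pos hPne]; exact min_le_right _ _
    have h2 : P.min' hPne ≤ a i - b i := P.min'_le _ hmem
    have : a i - b i = ε := by rw [hcon]; ring
    rw [this] at h2
    linarith [hε.2]
  -- the inequality holds for perturbed b
  have hineq : ∀ ε ∈ Set.Ioo 0 μ,
      ∑ j ∈ range m, φ (b j + ε) ≤ ∑ j ∈ range m, φ (a j) := by
    intro ε hε
    apply key_distinct φ hconv hanti m a (fun j => b j + ε) ha
    · intro i hi; have := hb i hi; linarith [hε.1]
    · exact ham
    · intro i hi; have := hbm i hi; linarith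
    · intro k hk
      calc ∑ j ∈ range k, a j ≤ ∑ j ∈ range k, b j := hpre k hk
        _ ≤ ∑ j ∈ range k, (b j + ε) := by
            apply Finset.sum_le_sum; intro i _; linarith [hε.1]
    · exact hgood ε hε
  -- take the limit ε → 0⁺
  have hcont : ContinuousOn φ (Set.Ioi 0) := hconv.continuousOn isOpen_Ioi
  have htend : Filter.Tendsto (fun ε => ∑ j ∈ range m, φ (b j + ε))
      (nhdsWithin 0 (Set.Ioi 0)) (nhds (∑ j ∈ range m, φ (b j))) := by
    apply tendsto_finset_sum
    intro j hj
    rw [mem_range] at hj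
    have h1 : Filter.Tendsto (fun ε : ℝ => b j + ε) (nhdsWithin 0 (Set.Ioi 0))
        (nhdsWithin (b j) (Set.Ioi 0)) := by
      apply tendsto_nhdsWithin_of_tendsto_nhds_of_eventually_within
      · have : Filter.Tendsto (fun ε : ℝ => b j + ε) (nhds 0) (nhds (b j + 0)) :=
          (continuous_const.add continuous_id).tendsto 0
        rw [add_zero] at this
        exact this.mono_left nhdsWithin_le_nhds
      · filter_upwards [self_mem_nhdsWithin] with ε hε
        have := hb j hj
        exact Set.mem_Ioi.mpr (by simp only [Set.mem_Ioi] at hε; linarith)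
    exact ((hcont (b j) (Set.mem_Ioi.mpr (hb j hj))).tendsto.comp h1)
  refine le_of_tendsto htend ?_
  filter_upwards [Ioo_mem_nhdsGT_of_mem (by simp [hμpos] : (0:ℝ) ∈ Set.Ico 0 μ)] with ε hε
  exact hineq ε hε

lemma filter_lt_succ {n k : ℕ} (hk : k < n) :
    (Finset.univ.filter (fun i : Fin n => (i:ℕ) < k+1))
      = insert (⟨k, hk⟩ : Fin n) (Finset.univ.filter (fun i : Fin n => (i:ℕ) < k)) := by
  ext i
  simp only [mem_filter, mem_insert, mem_univ, true_and, Fin.ext_iff]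
  omega

lemma not_mem_filter_lt {n k : ℕ} (hk : k < n) :
    (⟨k, hk⟩ : Fin n) ∉ Finset.univ.filter (fun i : Fin n => (i:ℕ) < k) := by
  simp

lemma prefixSum_eq_range {n : ℕ} (a : Fin n → ℝ) (A : ℕ → ℝ)
    (hA : ∀ j (h : j < n), A j = a ⟨j, h⟩) :
    ∀ k, k ≤ n → prefixSum a k = ∑ j ∈ range k, A j := by
  intro k
  induction k with
  | zero => intro _; simp [prefixSum]
  | succ k ih =>
    intro hk
    have hkn : k < n := by omega
    rw [prefixSum, filter_lt_succ hkn, Finset.sum_insert (not_mem_filter_lt hkn),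
      Finset.sum_range_succ, ← prefixSum, ih (by omega), hA k hkn]
    ring

lemma prefixProd_eq_range {n : ℕ} (a : Fin n → ℝ) (A : ℕ → ℝ)
    (hA : ∀ j (h : j < n), A j = a ⟨j, h⟩) :
    ∀ k, k ≤ n → prefixProd a k = ∏ j ∈ range k, A j := by
  intro k
  induction k with
  | zero => intro _; simp [prefixProd]
  | succ k ih =>
    intro hk
    have hkn : k < n := by omega
    rw [prefixProd, filter_lt_succ hkn, Finset.prod_insert (not_mem_filter_lt hkn),
      Finset.prod_range_succ, ← prefixProd, ih (by omega), hA k hkn]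
    ring

lemma sum_Icc_one_eq_range (n : ℕ) (f : ℕ → ℝ) :
    ∑ m ∈ Finset.Icc 1 n, f m = ∑ j ∈ range n, f (1 + j) := by
  rw [← Finset.Ico_add_one_right_eq_Icc, Finset.sum_Ico_eq_sum_range]
  simp

/-- Theorem 3.3: smallest claim amounts with random numbers of claims,
usual stochastic order. -/
theorem stmt_2 {n : ℕ} (hn : 1 ≤ n) (s g : ℝ → ℝ)
    (hs_pos : ∀ a > 0, 0 < s a) (hs_le : ∀ a > 0, s a ≤ 1)
    (hs_anti : AntitoneOn s (Set.Ioi 0))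
    (hs_logconv : ConvexOn ℝ (Set.Ioi 0) (fun a => Real.log (s a)))
    (hg : ∀ t > 0, 0 < g t ∧ g t < 1)
    (hg_anti : AntitoneOn g (Set.Ioi 0))
    (hg_logconv : ConvexOn ℝ (Set.Ioi 0) (fun t => Real.log (g t)))
    (v u α β : Fin n → ℝ)
    (hv : ∀ i, 0 < v i) (hu : ∀ i, 0 < u i)
    (hα : ∀ i, 0 < α i) (hβ : ∀ i, 0 < β i)
    (hvm : Monotone v) (hum : Monotone u) (hαm : Monotone α) (hβm : Monotone β)
    (hmajα : ∀ k, 1 ≤ k → k ≤ n → prefixSum α k ≤ prefixSum β k)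
    (hmajv : ∀ k, 1 ≤ k → k ≤ n → prefixSum v k ≤ prefixSum u k)
    (q₁ q₂ : ℕ → ℝ)
    (hq₁ : ∀ m ∈ Finset.Icc 1 n, 0 ≤ q₁ m) (hq₂ : ∀ m ∈ Finset.Icc 1 n, 0 ≤ q₂ m)
    (hq₁sum : ∑ m ∈ Finset.Icc 1 n, q₁ m = 1)
    (hq₂sum : ∑ m ∈ Finset.Icc 1 n, q₂ m = 1)
    (hst : ∀ k, 1 ≤ k → k ≤ n →
      ∑ m ∈ Finset.Icc k n, q₁ m ≤ ∑ m ∈ Finset.Icc k n, q₂ m) :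
    ∑ m ∈ Finset.Icc 1 n, q₂ m * prefixProd (fun i => g (u i) * s (β i)) m ≤
      ∑ m ∈ Finset.Icc 1 n, q₁ m * prefixProd (fun i => g (v i) * s (α i)) m := by
  classical
  -- extensions to ℕ
  set V : ℕ → ℝ := fun j => if h : j < n then v ⟨j, h⟩ else 1 with hV
  set U : ℕ → ℝ := fun j => if h : j < n then u ⟨j, h⟩ else 1 with hU
  set A : ℕ → ℝ := fun j => if h : j < n then α ⟨j, h⟩ else 1 with hA
  set B : ℕ → ℝ := fun j => if h : j < n then β ⟨j, h⟩ else 1 with hB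
  have hVd : ∀ j (h : j < n), V j = v ⟨j, h⟩ := fun j h => dif_pos h
  have hUd : ∀ j (h : j < n), U j = u ⟨j, h⟩ := fun j h => dif_pos h
  have hAd : ∀ j (h : j < n), A j = α ⟨j, h⟩ := fun j h => dif_pos h
  have hBd : ∀ j (h : j < n), B j = β ⟨j, h⟩ := fun j h => dif_pos h
  set P : ℕ → ℝ := fun m => prefixProd (fun i => g (v i) * s (α i)) m with hPdef
  set Q : ℕ → ℝ := fun m => prefixProd (fun i => g (u i) * s (β i)) m with hQdef
  -- positivity of factors
  have hfac1 : ∀ i : Fin n, 0 < g (v i) * s (α i) :=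
    fun i => mul_pos (hg _ (hv i)).1 (hs_pos _ (hα i))
  have hfac2 : ∀ i : Fin n, 0 < g (u i) * s (β i) :=
    fun i => mul_pos (hg _ (hu i)).1 (hs_pos _ (hβ i))
  have hfac1le : ∀ i : Fin n, g (v i) * s (α i) ≤ 1 := fun i =>
    mul_le_one₀ (hg _ (hv i)).2.le (hs_pos _ (hα i)).le (hs_le _ (hα i))
  have hP_pos : ∀ m, 0 < P m := by
    intro m
    exact Finset.prod_pos (fun i _ => hfac1 i)
  have hP_mono : ∀ m, P (m + 1) ≤ P m := by
    intro m
    have hsub : (Finset.univ.filter (fun i : Fin n => (i:ℕ) < m))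
        ⊆ (Finset.univ.filter (fun i : Fin n => (i:ℕ) < m+1)) := by
      intro i hi
      simp only [mem_filter, mem_univ, true_and] at *
      omega
    show prefixProd _ (m+1) ≤ prefixProd _ m
    rw [prefixProd, prefixProd, ← Finset.prod_sdiff hsub]
    have h1 : (∏ i ∈ (Finset.univ.filter (fun i : Fin n => (i:ℕ) < m+1)) \
        (Finset.univ.filter (fun i : Fin n => (i:ℕ) < m)), (g (v i) * s (α i))) ≤ 1 :=
      Finset.prod_le_one (fun i _ => (hfac1 i).le) (fun i _ => hfac1le i)
    have h2 : (0:ℝ) < ∏ i ∈ Finset.univ.filter (fun i : Fin n => (i:ℕ) < m),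
        (g (v i) * s (α i)) := Finset.prod_pos (fun i _ => hfac1 i)
    nlinarith
  -- step A : Q m ≤ P m for m ∈ [1, n]
  have hprod : ∀ m, 1 ≤ m → m ≤ n → Q m ≤ P m := by
    intro m hm1 hmn
    show prefixProd (fun i => g (u i) * s (β i)) m ≤ prefixProd (fun i => g (v i) * s (α i)) m
    have hkey1 : ∑ j ∈ range m, Real.log (g (U j)) ≤ ∑ j ∈ range m, Real.log (g (V j)) := by
      apply key _ hg_logconv ?anti1 m V U
      case anti1 =>
        intro x hx y hy hxy
        exact Real.log_le_log (hg _ hy).1 (hg_anti hx hy hxy)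
      · intro i hi; rw [hVd i (by omega)]; exact hv _
      · intro i hi; rw [hUd i (by omega)]; exact hu _
      · intro i hi
        rw [hVd i (by omega), hVd (i+1) (by omega)]
        exact hvm (by simp [Fin.mk_le_mk])
      · intro i hi
        rw [hUd i (by omega), hUd (i+1) (by omega)]
        exact hum (by simp [Fin.mk_le_mk])
      · intro k hk
        rcases Nat.eq_zero_or_pos k with rfl | hk1
        · simp
        · rw [← prefixSum_eq_range v V hVd k (by omega),
            ← prefixSum_eq_range u U hUd k (by omega)]
          exact hmajv k hk1 (by omega)
    have hkey2 : ∑ j ∈ range m, Real.log (s (B j)) ≤ ∑ j ∈ range m, Real.log (s (A j)) := by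
      apply key _ hs_logconv ?anti2 m A B
      case anti2 =>
        intro x hx y hy hxy
        exact Real.log_le_log (hs_pos _ hy) (hs_anti hx hy hxy)
      · intro i hi; rw [hAd i (by omega)]; exact hα _
      · intro i hi; rw [hBd i (by omega)]; exact hβ _
      · intro i hi
        rw [hAd i (by omega), hAd (i+1) (by omega)]
        exact hαm (by simp [Fin.mk_le_mk])
      · intro i hi
        rw [hBd i (by omega), hBd (i+1) (by omega)]
        exact hβm (by simp [Fin.mk_le_mk])
      · intro k hk
        rcases Nat.eq_zero_or_pos k with rfl | hk1
        · simp
        · rw [← prefixSum_eq_range α A hAd k (by omega),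
            ← prefixSum_eq_range β B hBd k (by omega)]
          exact hmajα k hk1 (by omega)
    have hVpos : ∀ j, j < m → 0 < V j := by
      intro j hj; rw [hVd j (by omega)]; exact hv _
    have hUpos : ∀ j, j < m → 0 < U j := by
      intro j hj; rw [hUd j (by omega)]; exact hu _
    have hApos : ∀ j, j < m → 0 < A j := by
      intro j hj; rw [hAd j (by omega)]; exact hα _
    have hBpos : ∀ j, j < m → 0 < B j := by
      intro j hj; rw [hBd j (by omega)]; exact hβ _
    have eP : prefixProd (fun i => g (v i) * s (α i)) m
        = Real.exp (∑ j ∈ range m, (Real.log (g (V j)) + Real.log (s (A j)))) := by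
      rw [prefixProd_eq_range _ (fun j => g (V j) * s (A j))
        (fun j h => by show g (V j) * s (A j) = _; rw [hVd j h, hAd j h]) m hmn, Real.exp_sum]
      apply Finset.prod_congr rfl
      intro j hj
      rw [mem_range] at hj
      rw [Real.exp_add, Real.exp_log (hg _ (hVpos j hj)).1, Real.exp_log (hs_pos _ (hApos j hj))]
    have eQ : prefixProd (fun i => g (u i) * s (β i)) m
        = Real.exp (∑ j ∈ range m, (Real.log (g (U j)) + Real.log (s (B j)))) := by
      rw [prefixProd_eq_range _ (fun j => g (U j) * s (B j))
        (fun j h => by show g (U j) * s (B j) = _; rw [hUd j h, hBd j h]) m hmn, Real.exp_sum]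
      apply Finset.prod_congr rfl
      intro j hj
      rw [mem_range] at hj
      rw [Real.exp_add, Real.exp_log (hg _ (hUpos j hj)).1, Real.exp_log (hs_pos _ (hBpos j hj))]
    rw [eP, eQ, Real.exp_le_exp, Finset.sum_add_distrib, Finset.sum_add_distrib]
    exact add_le_add hkey1 hkey2
  -- step B : Abel argument in m
  have main2 : ∑ m ∈ Finset.Icc 1 n, q₂ m * P m ≤ ∑ m ∈ Finset.Icc 1 n, q₁ m * P m := by
    rw [← sub_nonneg, sum_Icc_one_eq_range, sum_Icc_one_eq_range, ← Finset.sum_sub_distrib]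
    have hrw : ∀ j ∈ range n, q₁ (1+j) * P (1+j) - q₂ (1+j) * P (1+j)
        = (fun j => -P (1+j)) j * (fun j => q₂ (1+j) - q₁ (1+j)) j := by
      intro j _; ring
    rw [Finset.sum_congr rfl hrw]
    apply abel_ineq
    · intro i hi
      have := hP_mono (1+i)
      have e1 : 1 + (i+1) = (1+i) + 1 := by omega
      rw [e1]
      linarith
    · intro i _
      have := hP_pos (1+i)
      linarith
    · intro k hk
      have e1 : ∑ j ∈ range k, (q₂ (1+j) - q₁ (1+j))
          = ∑ m ∈ Finset.Icc 1 k, q₂ m - ∑ m ∈ Finset.Icc 1 k, q₁ m := by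
        rw [Finset.sum_sub_distrib, sum_Icc_one_eq_range, sum_Icc_one_eq_range]
      rw [e1]
      have hsplit : ∀ q : ℕ → ℝ, ∑ m ∈ Finset.Icc 1 k, q m + ∑ m ∈ Finset.Icc (k+1) n, q m
          = ∑ m ∈ Finset.Icc 1 n, q m := by
        intro q
        have e : ∀ a b : ℕ, Finset.Icc (a+1) b = Finset.Ioc a b := Finset.Icc_add_one_left_eq_Ioc
        rw [show Finset.Icc 1 k = Finset.Ioc 0 k from e 0 k, show Finset.Icc 1 n = Finset.Ioc 0 n from e 0 n, e k n]
        exact Finset.sum_Ioc_consecutive _ (Nat.zero_le k) hk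
      have h1 := hsplit q₁
      have h2 := hsplit q₂
      by_cases hkn : k = n
      · subst hkn
        have : Finset.Icc (k+1) k = ∅ := Finset.Icc_eq_empty (by omega)
        rw [this, Finset.sum_empty] at h1 h2
        rw [hq₁sum] at h1
        rw [hq₂sum] at h2
        linarith
      · have := hst (k+1) (by omega) (by omega)
        rw [hq₁sum] at h1
        rw [hq₂sum] at h2
        linarith
  -- combine
  calc ∑ m ∈ Finset.Icc 1 n, q₂ m * Q m
      ≤ ∑ m ∈ Finset.Icc 1 n, q₂ m * P m := by
        apply Finset.sum_le_sum
        intro m hm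
        rw [Finset.mem_Icc] at hm
        exact mul_le_mul_of_nonneg_left (hprod m hm.1 hm.2) (hq₂ m (Finset.mem_Icc.mpr hm))
    _ ≤ ∑ m ∈ Finset.Icc 1 n, q₁ m * P m := main2
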